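/- Each of the six vector fields X₁ = χ sinθ cosφ ∂_r + (χ/r) cosθ cosφ ∂_θ − (χ sinφ/(r sinθ)) ∂_φ, X₂ = χ sinθ sinφ ∂_r + (χ/r) cosθ sinφ ∂_θ + (χ cosφ/(r sinθ)) ∂_φ, X₃ = χ cosθ ∂_r − (χ/r) sinθ ∂_θ, X₄ = sinφ ∂_θ + (cosφ/tanθ) ∂_φ, X₅ = −cosφ ∂_θ + (sinφ/tanθ) ∂_φ, X₆ = ∂_φ (where χ = √(1 − k r²)) satisfies the Killing equation X^α ∂_α g_{μν} + g_{αν} ∂_μ X^α + g_{μα} ∂_ν X^α = 0 at every point of U, for the Robertson–Walker metric g = diag(−1, a(t)²/(1 − k r²), a(t)² r², a(t)² r² sin²θ) in coordinates (t,r,θ,φ). -/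

import Mathlib

/-!
STATEMENT 0: The six vector fields X₁,…,X₆ (with χ = √(1 − k r²)) are Killing vector
fields of the Robertson–Walker metric
g = diag(−1, a(t)²/(1 − k r²), a(t)² r², a(t)² r² sin²θ)
in coordinates (t,r,θ,φ), on the chart domain
U = {(t,r,θ,φ) : r > 0, 0 < θ < π, 1 − k r² > 0}.
Coordinates: points are x : Fin 4 → ℝ with t = x 0, r = x 1, θ = x 2, φ = x 3.
-/

open Real
open scoped ContDiff

noncomputable section

/-- Partial derivative in the μ-th coordinate direction. -/
def pd (μ : Fin 4) (f : (Fin 4 → ℝ) → ℝ) (x : Fin 4 → ℝ) : ℝ :=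
  fderiv ℝ f x (Pi.single μ 1)

/-- χ = √(1 − k r²). -/
def chi (k : ℝ) (x : Fin 4 → ℝ) : ℝ := Real.sqrt (1 - k * (x 1) ^ 2)

/-- The Robertson–Walker metric g = diag(−1, a²/(1−kr²), a² r², a² r² sin²θ). -/
def gRW (k : ℝ) (a : ℝ → ℝ) (x : Fin 4 → ℝ) : Matrix (Fin 4) (Fin 4) ℝ :=
  Matrix.diagonal
    ![-1, (a (x 0)) ^ 2 / (1 - k * (x 1) ^ 2),
      (a (x 0)) ^ 2 * (x 1) ^ 2,
      (a (x 0)) ^ 2 * (x 1) ^ 2 * (Real.sin (x 2)) ^ 2]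

/-- The six vector fields X₁, X₂, X₃, X₄ = X_x, X₅ = X_y, X₆ = X_z,
given by their components (X^t, X^r, X^θ, X^φ). -/
def KV (k : ℝ) : Fin 6 → (Fin 4 → ℝ) → (Fin 4 → ℝ) :=
  ![fun x => ![0, chi k x * Real.sin (x 2) * Real.cos (x 3),
      (chi k x / (x 1)) * Real.cos (x 2) * Real.cos (x 3),
      -((chi k x * Real.sin (x 3)) / ((x 1) * Real.sin (x 2)))],
    fun x => ![0, chi k x * Real.sin (x 2) * Real.sin (x 3),
      (chi k x / (x 1)) * Real.cos (x 2) * Real.sin (x 3),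
      (chi k x * Real.cos (x 3)) / ((x 1) * Real.sin (x 2))],
    fun x => ![0, chi k x * Real.cos (x 2),
      -((chi k x / (x 1)) * Real.sin (x 2)), 0],
    fun x => ![0, 0, Real.sin (x 3), Real.cos (x 3) / Real.tan (x 2)],
    fun x => ![0, 0, -Real.cos (x 3), Real.sin (x 3) / Real.tan (x 2)],
    fun x => ![0, 0, 0, 1]]

set_option maxHeartbeats 2000000

theorem hasFDerivAt_coord (i : Fin 4) (x : Fin 4 → ℝ) {f : ℝ → ℝ} {d : ℝ}
    (hf : HasDerivAt f d (x i)) :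
    HasFDerivAt (fun y : Fin 4 → ℝ => f (y i))
      (d • (ContinuousLinearMap.proj i : (Fin 4 → ℝ) →L[ℝ] ℝ)) x :=
  hf.comp_hasFDerivAt x ((ContinuousLinearMap.proj (R := ℝ) (φ := fun _ : Fin 4 => ℝ) i).hasFDerivAt)

theorem pd_prod4 {x : Fin 4 → ℝ} {f0 f1 f2 f3 : ℝ → ℝ} {d0 d1 d2 d3 : ℝ}
    (h0 : HasDerivAt f0 d0 (x 0)) (h1 : HasDerivAt f1 d1 (x 1))
    (h2 : HasDerivAt f2 d2 (x 2)) (h3 : HasDerivAt f3 d3 (x 3)) (μ : Fin 4) :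
    pd μ (fun y => f0 (y 0) * f1 (y 1) * f2 (y 2) * f3 (y 3)) x =
      ![d0 * f1 (x 1) * f2 (x 2) * f3 (x 3),
        f0 (x 0) * d1 * f2 (x 2) * f3 (x 3),
        f0 (x 0) * f1 (x 1) * d2 * f3 (x 3),
        f0 (x 0) * f1 (x 1) * f2 (x 2) * d3] μ := by
  have H := (((hasFDerivAt_coord 0 x h0).mul (hasFDerivAt_coord 1 x h1)).mul
      (hasFDerivAt_coord 2 x h2)).mul (hasFDerivAt_coord 3 x h3)
  rw [pd, HasFDerivAt.fderiv (f := fun y : Fin 4 → ℝ => f0 (y 0) * f1 (y 1) * f2 (y 2) * f3 (y 3)) H]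
  fin_cases μ <;>
    norm_num [Pi.single_apply, Fin.ext_iff, show ((0:Fin 4):ℕ) = 0 from rfl,
      show ((1:Fin 4):ℕ) = 1 from rfl, show ((2:Fin 4):ℕ) = 2 from rfl,
      show ((3:Fin 4):ℕ) = 3 from rfl] <;> ring

theorem pd_const (c : ℝ) (x : Fin 4 → ℝ) (μ : Fin 4) : pd μ (fun _ => c) x = 0 := by
  simp [pd]

variable {k : ℝ} {a : ℝ → ℝ} {x : Fin 4 → ℝ}

private theorem hu' : HasDerivAt (fun r : ℝ => 1 - k * r ^ 2) (-(2 * k * x 1)) (x 1) := by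
  have := ((hasDerivAt_pow 2 (x 1)).const_mul k).const_sub 1
  refine this.congr_deriv ?_
  push_cast
  ring

private theorem hsq' (hk : 0 < 1 - k * x 1 ^ 2) : HasDerivAt (fun r : ℝ => Real.sqrt (1 - k * r ^ 2))
    (-(2 * k * x 1) / (2 * Real.sqrt (1 - k * x 1 ^ 2))) (x 1) :=
  hu'.sqrt hk.ne'


private theorem hsqdiv' (hk : 0 < 1 - k * x 1 ^ 2) (hr : x 1 ≠ 0) : HasDerivAt (fun r : ℝ => Real.sqrt (1 - k * r ^ 2) / r)
    ((-(2 * k * x 1) / (2 * Real.sqrt (1 - k * x 1 ^ 2)) * x 1 - Real.sqrt (1 - k * x 1 ^ 2) * 1) / x 1 ^ 2)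
    (x 1) :=
  (hsq' hk).div (hasDerivAt_id (x 1)) hr

private theorem hc2' (hk : 0 < 1 - k * x 1 ^ 2) :
    Real.sqrt (1 - k * x 1 ^ 2) ^ 2 = 1 - k * x 1 ^ 2 := Real.sq_sqrt hk.le

-- metric lemmas
theorem pdM1 (ha : ContDiff ℝ ∞ a) (hk : 0 < 1 - k * x 1 ^ 2) (μ : Fin 4) :
    pd μ (fun y => a (y 0) ^ 2 / (1 - k * y 1 ^ 2)) x =
      ![2 * a (x 0) * deriv a (x 0) / (1 - k * x 1 ^ 2),
        2 * k * x 1 * a (x 0) ^ 2 / (1 - k * x 1 ^ 2) ^ 2, 0, 0] μ := by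
  have hA : HasDerivAt (fun t : ℝ => a t ^ 2) (2 * a (x 0) ^ 1 * deriv a (x 0)) (x 0) := by
    have h := ((ha.differentiable (by norm_num)) (x 0)).hasDerivAt.pow 2
    norm_num at h
    exact h.congr_deriv (by ring)
  have hinv := (hu' (k := k) (x := x)).inv hk.ne'
  rw [show (fun y : Fin 4 → ℝ => a (y 0) ^ 2 / (1 - k * y 1 ^ 2))
      = (fun y : Fin 4 → ℝ => a (y 0) ^ 2 * (1 - k * y 1 ^ 2)⁻¹ * 1 * 1)
      from funext fun y => by ring]
  refine (pd_prod4 hA hinv (hasDerivAt_const _ _) (hasDerivAt_const _ _) μ).trans ?_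
  fin_cases μ <;>
    simp only [Matrix.cons_val_zero, Matrix.cons_val_one, Matrix.head_cons, Matrix.cons_val_two,
      Matrix.tail_cons, Matrix.cons_val_three, Fin.mk_one, Fin.isValue, Pi.inv_apply] <;>
    field_simp <;> ring

theorem pdM2 (ha : ContDiff ℝ ∞ a) (μ : Fin 4) :
    pd μ (fun y => a (y 0) ^ 2 * y 1 ^ 2) x =
      ![2 * a (x 0) * deriv a (x 0) * x 1 ^ 2, 2 * a (x 0) ^ 2 * x 1, 0, 0] μ := by
  have hA : HasDerivAt (fun t : ℝ => a t ^ 2) (2 * a (x 0) ^ 1 * deriv a (x 0)) (x 0) := by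
    have h := ((ha.differentiable (by norm_num)) (x 0)).hasDerivAt.pow 2
    norm_num at h
    exact h.congr_deriv (by ring)
  rw [show (fun y : Fin 4 → ℝ => a (y 0) ^ 2 * y 1 ^ 2)
      = (fun y : Fin 4 → ℝ => a (y 0) ^ 2 * y 1 ^ 2 * 1 * 1)
      from funext fun y => by ring]
  refine (pd_prod4 hA (hasDerivAt_pow 2 (x 1)) (hasDerivAt_const _ _) (hasDerivAt_const _ _) μ).trans ?_
  fin_cases μ <;>
    simp only [Matrix.cons_val_zero, Matrix.cons_val_one, Matrix.head_cons, Matrix.cons_val_two,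
      Matrix.tail_cons, Matrix.cons_val_three, Fin.mk_one, Fin.isValue] <;>
    push_cast <;> ring

theorem pdM3 (ha : ContDiff ℝ ∞ a) (μ : Fin 4) :
    pd μ (fun y => a (y 0) ^ 2 * y 1 ^ 2 * Real.sin (y 2) ^ 2) x =
      ![2 * a (x 0) * deriv a (x 0) * x 1 ^ 2 * Real.sin (x 2) ^ 2,
        2 * a (x 0) ^ 2 * x 1 * Real.sin (x 2) ^ 2,
        2 * a (x 0) ^ 2 * x 1 ^ 2 * Real.sin (x 2) * Real.cos (x 2), 0] μ := by
  have hA : HasDerivAt (fun t : ℝ => a t ^ 2) (2 * a (x 0) ^ 1 * deriv a (x 0)) (x 0) := by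
    have h := ((ha.differentiable (by norm_num)) (x 0)).hasDerivAt.pow 2
    norm_num at h
    exact h.congr_deriv (by ring)
  have hS : HasDerivAt (fun θ : ℝ => Real.sin θ ^ 2)
      (2 * Real.sin (x 2) ^ 1 * Real.cos (x 2)) (x 2) := (Real.hasDerivAt_sin (x 2)).pow 2
  rw [show (fun y : Fin 4 → ℝ => a (y 0) ^ 2 * y 1 ^ 2 * Real.sin (y 2) ^ 2)
      = (fun y : Fin 4 → ℝ => a (y 0) ^ 2 * y 1 ^ 2 * Real.sin (y 2) ^ 2 * 1)
      from funext fun y => by ring]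
  refine (pd_prod4 hA (hasDerivAt_pow 2 (x 1)) hS (hasDerivAt_const _ _) μ).trans ?_
  fin_cases μ <;>
    simp only [Matrix.cons_val_zero, Matrix.cons_val_one, Matrix.head_cons, Matrix.cons_val_two,
      Matrix.tail_cons, Matrix.cons_val_three, Fin.mk_one, Fin.isValue] <;>
    push_cast <;> ring


private theorem hcot' {x : Fin 4 → ℝ} (hs : Real.sin (x 2) ≠ 0) :
    HasDerivAt (fun θ : ℝ => Real.cos θ / Real.sin θ) (-(1 / Real.sin (x 2) ^ 2)) (x 2) := by
  have h := (Real.hasDerivAt_cos (x 2)).div (Real.hasDerivAt_sin (x 2)) hs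
  have e : (-Real.sin (x 2) * Real.sin (x 2) - Real.cos (x 2) * Real.cos (x 2)) / Real.sin (x 2) ^ 2 = -(1 / Real.sin (x 2) ^ 2) := by
    rw [show (1:ℝ) = Real.sin (x 2) ^ 2 + Real.cos (x 2) ^ 2 from (Real.sin_sq_add_cos_sq (x 2)).symm]
    ring
  exact e ▸ h

private theorem hinvsin' {x : Fin 4 → ℝ} (hs : Real.sin (x 2) ≠ 0) :
    HasDerivAt (fun θ : ℝ => (Real.sin θ)⁻¹)
      (-Real.cos (x 2) / Real.sin (x 2) ^ 2) (x 2) :=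
  (Real.hasDerivAt_sin (x 2)).inv hs

theorem pdK1 (hk : 0 < 1 - k * x 1 ^ 2) (hr : x 1 ≠ 0) (μ : Fin 4) :
    pd μ (fun y : Fin 4 → ℝ => Real.sqrt (1 - k * y 1 ^ 2) * Real.sin (y 2) * Real.cos (y 3)) x =
      ![0,
        -(k * x 1 / Real.sqrt (1 - k * x 1 ^ 2)) * Real.sin (x 2) * Real.cos (x 3),
        Real.sqrt (1 - k * x 1 ^ 2) * Real.cos (x 2) * Real.cos (x 3),
        -(Real.sqrt (1 - k * x 1 ^ 2) * Real.sin (x 2) * Real.sin (x 3))] μ := by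
  rw [show (fun y : Fin 4 → ℝ => Real.sqrt (1 - k * y 1 ^ 2) * Real.sin (y 2) * Real.cos (y 3))
      = (fun y : Fin 4 → ℝ => 1 * Real.sqrt (1 - k * y 1 ^ 2) * Real.sin (y 2) * Real.cos (y 3))
      from funext fun y => by ring]
  refine (pd_prod4 (hasDerivAt_const _ _) (hsq' hk) (Real.hasDerivAt_sin _) (Real.hasDerivAt_cos _) μ).trans ?_
  have hcpos : 0 < Real.sqrt (1 - k * x 1 ^ 2) := Real.sqrt_pos.mpr hk
  have hc2 : Real.sqrt (1 - k * x 1 ^ 2) ^ 2 = 1 - k * x 1 ^ 2 := Real.sq_sqrt hk.le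
  obtain ⟨c, hc⟩ : ∃ c : ℝ, Real.sqrt (1 - k * x 1 ^ 2) = c := ⟨_, rfl⟩
  rw [hc] at hcpos hc2 ⊢
  rw [show k = (1 - c ^ 2) / x 1 ^ 2 from by rw [hc2]; field_simp; ring]
  fin_cases μ <;>
    simp only [Matrix.cons_val_zero, Matrix.cons_val_one, Matrix.head_cons, Matrix.cons_val_two,
      Matrix.tail_cons, Matrix.cons_val_three, Fin.mk_one, Fin.isValue] <;>
    field_simp <;> (try ring) <;> (try simp)

theorem pdK2 (hk : 0 < 1 - k * x 1 ^ 2) (hr : x 1 ≠ 0) (μ : Fin 4) :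
    pd μ (fun y : Fin 4 → ℝ => Real.sqrt (1 - k * y 1 ^ 2) / y 1 * Real.cos (y 2) * Real.cos (y 3)) x =
      ![0,
        -((k * x 1 ^ 2 / Real.sqrt (1 - k * x 1 ^ 2) + Real.sqrt (1 - k * x 1 ^ 2)) / x 1 ^ 2) * Real.cos (x 2) * Real.cos (x 3),
        -(Real.sqrt (1 - k * x 1 ^ 2) / x 1 * Real.sin (x 2) * Real.cos (x 3)),
        -(Real.sqrt (1 - k * x 1 ^ 2) / x 1 * Real.cos (x 2) * Real.sin (x 3))] μ := by
  rw [show (fun y : Fin 4 → ℝ => Real.sqrt (1 - k * y 1 ^ 2) / y 1 * Real.cos (y 2) * Real.cos (y 3))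
      = (fun y : Fin 4 → ℝ => 1 * (Real.sqrt (1 - k * y 1 ^ 2) / y 1) * Real.cos (y 2) * Real.cos (y 3))
      from funext fun y => by ring]
  refine (pd_prod4 (hasDerivAt_const _ _) (hsqdiv' hk hr) (Real.hasDerivAt_cos _) (Real.hasDerivAt_cos _) μ).trans ?_
  have hcpos : 0 < Real.sqrt (1 - k * x 1 ^ 2) := Real.sqrt_pos.mpr hk
  have hc2 : Real.sqrt (1 - k * x 1 ^ 2) ^ 2 = 1 - k * x 1 ^ 2 := Real.sq_sqrt hk.le
  obtain ⟨c, hc⟩ : ∃ c : ℝ, Real.sqrt (1 - k * x 1 ^ 2) = c := ⟨_, rfl⟩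
  rw [hc] at hcpos hc2 ⊢
  rw [show k = (1 - c ^ 2) / x 1 ^ 2 from by rw [hc2]; field_simp; ring]
  fin_cases μ <;>
    simp only [Matrix.cons_val_zero, Matrix.cons_val_one, Matrix.head_cons, Matrix.cons_val_two,
      Matrix.tail_cons, Matrix.cons_val_three, Fin.mk_one, Fin.isValue] <;>
    field_simp <;> (try ring) <;> (try simp)

theorem pdK3 (hk : 0 < 1 - k * x 1 ^ 2) (hr : x 1 ≠ 0) (hs : Real.sin (x 2) ≠ 0) (μ : Fin 4) :
    pd μ (fun y : Fin 4 → ℝ => -(Real.sqrt (1 - k * y 1 ^ 2) * Real.sin (y 3) / (y 1 * Real.sin (y 2)))) x =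
      ![0,
        -(-((k * x 1 ^ 2 / Real.sqrt (1 - k * x 1 ^ 2) + Real.sqrt (1 - k * x 1 ^ 2)) / x 1 ^ 2)) * Real.sin (x 3) / Real.sin (x 2),
        Real.sqrt (1 - k * x 1 ^ 2) / x 1 * Real.cos (x 2) * Real.sin (x 3) / Real.sin (x 2) ^ 2,
        -(Real.sqrt (1 - k * x 1 ^ 2) / x 1 * Real.cos (x 3) / Real.sin (x 2))] μ := by
  rw [show (fun y : Fin 4 → ℝ => -(Real.sqrt (1 - k * y 1 ^ 2) * Real.sin (y 3) / (y 1 * Real.sin (y 2))))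
      = (fun y : Fin 4 → ℝ => 1 * (-(Real.sqrt (1 - k * y 1 ^ 2) / y 1)) * (Real.sin (y 2))⁻¹ * Real.sin (y 3))
      from funext fun y => by ring]
  refine (pd_prod4 (hasDerivAt_const _ _) ((hsqdiv' hk hr).neg) (hinvsin' hs) (Real.hasDerivAt_sin _) μ).trans ?_
  simp only [Pi.neg_apply]
  have hcpos : 0 < Real.sqrt (1 - k * x 1 ^ 2) := Real.sqrt_pos.mpr hk
  have hc2 : Real.sqrt (1 - k * x 1 ^ 2) ^ 2 = 1 - k * x 1 ^ 2 := Real.sq_sqrt hk.le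
  obtain ⟨c, hc⟩ : ∃ c : ℝ, Real.sqrt (1 - k * x 1 ^ 2) = c := ⟨_, rfl⟩
  rw [hc] at hcpos hc2 ⊢
  rw [show k = (1 - c ^ 2) / x 1 ^ 2 from by rw [hc2]; field_simp; ring]
  fin_cases μ <;>
    simp only [Matrix.cons_val_zero, Matrix.cons_val_one, Matrix.head_cons, Matrix.cons_val_two,
      Matrix.tail_cons, Matrix.cons_val_three, Fin.mk_one, Fin.isValue] <;>
    field_simp <;> (try ring) <;> (try simp)

theorem pdK4 (hk : 0 < 1 - k * x 1 ^ 2) (hr : x 1 ≠ 0) (μ : Fin 4) :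
    pd μ (fun y : Fin 4 → ℝ => Real.sqrt (1 - k * y 1 ^ 2) * Real.sin (y 2) * Real.sin (y 3)) x =
      ![0,
        -(k * x 1 / Real.sqrt (1 - k * x 1 ^ 2)) * Real.sin (x 2) * Real.sin (x 3),
        Real.sqrt (1 - k * x 1 ^ 2) * Real.cos (x 2) * Real.sin (x 3),
        Real.sqrt (1 - k * x 1 ^ 2) * Real.sin (x 2) * Real.cos (x 3)] μ := by
  rw [show (fun y : Fin 4 → ℝ => Real.sqrt (1 - k * y 1 ^ 2) * Real.sin (y 2) * Real.sin (y 3))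
      = (fun y : Fin 4 → ℝ => 1 * Real.sqrt (1 - k * y 1 ^ 2) * Real.sin (y 2) * Real.sin (y 3))
      from funext fun y => by ring]
  refine (pd_prod4 (hasDerivAt_const _ _) (hsq' hk) (Real.hasDerivAt_sin _) (Real.hasDerivAt_sin _) μ).trans ?_
  have hcpos : 0 < Real.sqrt (1 - k * x 1 ^ 2) := Real.sqrt_pos.mpr hk
  have hc2 : Real.sqrt (1 - k * x 1 ^ 2) ^ 2 = 1 - k * x 1 ^ 2 := Real.sq_sqrt hk.le
  obtain ⟨c, hc⟩ : ∃ c : ℝ, Real.sqrt (1 - k * x 1 ^ 2) = c := ⟨_, rfl⟩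
  rw [hc] at hcpos hc2 ⊢
  rw [show k = (1 - c ^ 2) / x 1 ^ 2 from by rw [hc2]; field_simp; ring]
  fin_cases μ <;>
    simp only [Matrix.cons_val_zero, Matrix.cons_val_one, Matrix.head_cons, Matrix.cons_val_two,
      Matrix.tail_cons, Matrix.cons_val_three, Fin.mk_one, Fin.isValue] <;>
    field_simp <;> (try ring) <;> (try simp)

theorem pdK5 (hk : 0 < 1 - k * x 1 ^ 2) (hr : x 1 ≠ 0) (μ : Fin 4) :
    pd μ (fun y : Fin 4 → ℝ => Real.sqrt (1 - k * y 1 ^ 2) / y 1 * Real.cos (y 2) * Real.sin (y 3)) x =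
      ![0,
        -((k * x 1 ^ 2 / Real.sqrt (1 - k * x 1 ^ 2) + Real.sqrt (1 - k * x 1 ^ 2)) / x 1 ^ 2) * Real.cos (x 2) * Real.sin (x 3),
        -(Real.sqrt (1 - k * x 1 ^ 2) / x 1 * Real.sin (x 2) * Real.sin (x 3)),
        Real.sqrt (1 - k * x 1 ^ 2) / x 1 * Real.cos (x 2) * Real.cos (x 3)] μ := by
  rw [show (fun y : Fin 4 → ℝ => Real.sqrt (1 - k * y 1 ^ 2) / y 1 * Real.cos (y 2) * Real.sin (y 3))
      = (fun y : Fin 4 → ℝ => 1 * (Real.sqrt (1 - k * y 1 ^ 2) / y 1) * Real.cos (y 2) * Real.sin (y 3))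
      from funext fun y => by ring]
  refine (pd_prod4 (hasDerivAt_const _ _) (hsqdiv' hk hr) (Real.hasDerivAt_cos _) (Real.hasDerivAt_sin _) μ).trans ?_
  have hcpos : 0 < Real.sqrt (1 - k * x 1 ^ 2) := Real.sqrt_pos.mpr hk
  have hc2 : Real.sqrt (1 - k * x 1 ^ 2) ^ 2 = 1 - k * x 1 ^ 2 := Real.sq_sqrt hk.le
  obtain ⟨c, hc⟩ : ∃ c : ℝ, Real.sqrt (1 - k * x 1 ^ 2) = c := ⟨_, rfl⟩
  rw [hc] at hcpos hc2 ⊢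
  rw [show k = (1 - c ^ 2) / x 1 ^ 2 from by rw [hc2]; field_simp; ring]
  fin_cases μ <;>
    simp only [Matrix.cons_val_zero, Matrix.cons_val_one, Matrix.head_cons, Matrix.cons_val_two,
      Matrix.tail_cons, Matrix.cons_val_three, Fin.mk_one, Fin.isValue] <;>
    field_simp <;> (try ring) <;> (try simp)

theorem pdK6 (hk : 0 < 1 - k * x 1 ^ 2) (hr : x 1 ≠ 0) (hs : Real.sin (x 2) ≠ 0) (μ : Fin 4) :
    pd μ (fun y : Fin 4 → ℝ => Real.sqrt (1 - k * y 1 ^ 2) * Real.cos (y 3) / (y 1 * Real.sin (y 2))) x =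
      ![0,
        -((k * x 1 ^ 2 / Real.sqrt (1 - k * x 1 ^ 2) + Real.sqrt (1 - k * x 1 ^ 2)) / x 1 ^ 2) * Real.cos (x 3) / Real.sin (x 2),
        -(Real.sqrt (1 - k * x 1 ^ 2) / x 1 * Real.cos (x 2) * Real.cos (x 3) / Real.sin (x 2) ^ 2),
        -(Real.sqrt (1 - k * x 1 ^ 2) / x 1 * Real.sin (x 3) / Real.sin (x 2))] μ := by
  rw [show (fun y : Fin 4 → ℝ => Real.sqrt (1 - k * y 1 ^ 2) * Real.cos (y 3) / (y 1 * Real.sin (y 2)))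
      = (fun y : Fin 4 → ℝ => 1 * (Real.sqrt (1 - k * y 1 ^ 2) / y 1) * (Real.sin (y 2))⁻¹ * Real.cos (y 3))
      from funext fun y => by ring]
  refine (pd_prod4 (hasDerivAt_const _ _) (hsqdiv' hk hr) (hinvsin' hs) (Real.hasDerivAt_cos _) μ).trans ?_
  have hcpos : 0 < Real.sqrt (1 - k * x 1 ^ 2) := Real.sqrt_pos.mpr hk
  have hc2 : Real.sqrt (1 - k * x 1 ^ 2) ^ 2 = 1 - k * x 1 ^ 2 := Real.sq_sqrt hk.le
  obtain ⟨c, hc⟩ : ∃ c : ℝ, Real.sqrt (1 - k * x 1 ^ 2) = c := ⟨_, rfl⟩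
  rw [hc] at hcpos hc2 ⊢
  rw [show k = (1 - c ^ 2) / x 1 ^ 2 from by rw [hc2]; field_simp; ring]
  fin_cases μ <;>
    simp only [Matrix.cons_val_zero, Matrix.cons_val_one, Matrix.head_cons, Matrix.cons_val_two,
      Matrix.tail_cons, Matrix.cons_val_three, Fin.mk_one, Fin.isValue] <;>
    field_simp <;> (try ring) <;> (try simp)

theorem pdK7 (hk : 0 < 1 - k * x 1 ^ 2) (hr : x 1 ≠ 0) (μ : Fin 4) :
    pd μ (fun y : Fin 4 → ℝ => Real.sqrt (1 - k * y 1 ^ 2) * Real.cos (y 2)) x =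
      ![0,
        -(k * x 1 / Real.sqrt (1 - k * x 1 ^ 2)) * Real.cos (x 2),
        -(Real.sqrt (1 - k * x 1 ^ 2) * Real.sin (x 2)),
        0] μ := by
  rw [show (fun y : Fin 4 → ℝ => Real.sqrt (1 - k * y 1 ^ 2) * Real.cos (y 2))
      = (fun y : Fin 4 → ℝ => 1 * Real.sqrt (1 - k * y 1 ^ 2) * Real.cos (y 2) * 1)
      from funext fun y => by ring]
  refine (pd_prod4 (hasDerivAt_const _ _) (hsq' hk) (Real.hasDerivAt_cos _) (hasDerivAt_const _ _) μ).trans ?_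
  have hcpos : 0 < Real.sqrt (1 - k * x 1 ^ 2) := Real.sqrt_pos.mpr hk
  have hc2 : Real.sqrt (1 - k * x 1 ^ 2) ^ 2 = 1 - k * x 1 ^ 2 := Real.sq_sqrt hk.le
  obtain ⟨c, hc⟩ : ∃ c : ℝ, Real.sqrt (1 - k * x 1 ^ 2) = c := ⟨_, rfl⟩
  rw [hc] at hcpos hc2 ⊢
  rw [show k = (1 - c ^ 2) / x 1 ^ 2 from by rw [hc2]; field_simp; ring]
  fin_cases μ <;>
    simp only [Matrix.cons_val_zero, Matrix.cons_val_one, Matrix.head_cons, Matrix.cons_val_two,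
      Matrix.tail_cons, Matrix.cons_val_three, Fin.mk_one, Fin.isValue] <;>
    field_simp <;> (try ring) <;> (try simp)

theorem pdK8 (hk : 0 < 1 - k * x 1 ^ 2) (hr : x 1 ≠ 0) (μ : Fin 4) :
    pd μ (fun y : Fin 4 → ℝ => -(Real.sqrt (1 - k * y 1 ^ 2) / y 1 * Real.sin (y 2))) x =
      ![0,
        -(-((k * x 1 ^ 2 / Real.sqrt (1 - k * x 1 ^ 2) + Real.sqrt (1 - k * x 1 ^ 2)) / x 1 ^ 2)) * Real.sin (x 2),
        -(Real.sqrt (1 - k * x 1 ^ 2) / x 1 * Real.cos (x 2)),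
        0] μ := by
  rw [show (fun y : Fin 4 → ℝ => -(Real.sqrt (1 - k * y 1 ^ 2) / y 1 * Real.sin (y 2)))
      = (fun y : Fin 4 → ℝ => 1 * (-(Real.sqrt (1 - k * y 1 ^ 2) / y 1)) * Real.sin (y 2) * 1)
      from funext fun y => by ring]
  refine (pd_prod4 (hasDerivAt_const _ _) ((hsqdiv' hk hr).neg) (Real.hasDerivAt_sin _) (hasDerivAt_const _ _) μ).trans ?_
  simp only [Pi.neg_apply]
  have hcpos : 0 < Real.sqrt (1 - k * x 1 ^ 2) := Real.sqrt_pos.mpr hk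
  have hc2 : Real.sqrt (1 - k * x 1 ^ 2) ^ 2 = 1 - k * x 1 ^ 2 := Real.sq_sqrt hk.le
  obtain ⟨c, hc⟩ : ∃ c : ℝ, Real.sqrt (1 - k * x 1 ^ 2) = c := ⟨_, rfl⟩
  rw [hc] at hcpos hc2 ⊢
  rw [show k = (1 - c ^ 2) / x 1 ^ 2 from by rw [hc2]; field_simp; ring]
  fin_cases μ <;>
    simp only [Matrix.cons_val_zero, Matrix.cons_val_one, Matrix.head_cons, Matrix.cons_val_two,
      Matrix.tail_cons, Matrix.cons_val_three, Fin.mk_one, Fin.isValue] <;>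
    field_simp <;> (try ring) <;> (try simp)

theorem pdK9 (μ : Fin 4) :
    pd μ (fun y : Fin 4 → ℝ => Real.sin (y 3)) x =
      ![0,
        0,
        0,
        Real.cos (x 3)] μ := by
  rw [show (fun y : Fin 4 → ℝ => Real.sin (y 3))
      = (fun y : Fin 4 → ℝ => 1 * 1 * 1 * Real.sin (y 3))
      from funext fun y => by ring]
  refine (pd_prod4 (hasDerivAt_const _ _) (hasDerivAt_const _ _) (hasDerivAt_const _ _) (Real.hasDerivAt_sin _) μ).trans ?_
  fin_cases μ <;>
    simp only [Matrix.cons_val_zero, Matrix.cons_val_one, Matrix.head_cons, Matrix.cons_val_two,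
      Matrix.tail_cons, Matrix.cons_val_three, Fin.mk_one, Fin.isValue] <;>
    (try field_simp) <;> (try ring) <;> (try simp)

theorem pdK10 (hs : Real.sin (x 2) ≠ 0) (μ : Fin 4) :
    pd μ (fun y : Fin 4 → ℝ => Real.cos (y 3) / Real.tan (y 2)) x =
      ![0,
        0,
        -(Real.cos (x 3) / Real.sin (x 2) ^ 2),
        -(Real.sin (x 3) * Real.cos (x 2) / Real.sin (x 2))] μ := by
  rw [show (fun y : Fin 4 → ℝ => Real.cos (y 3) / Real.tan (y 2))
      = (fun y : Fin 4 → ℝ => 1 * 1 * (Real.cos (y 2) / Real.sin (y 2)) * Real.cos (y 3))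
      from funext fun y => by rw [Real.tan_eq_sin_div_cos, div_div_eq_mul_div]; ring]
  refine (pd_prod4 (hasDerivAt_const _ _) (hasDerivAt_const _ _) (hcot' hs) (Real.hasDerivAt_cos _) μ).trans ?_
  fin_cases μ <;>
    simp only [Matrix.cons_val_zero, Matrix.cons_val_one, Matrix.head_cons, Matrix.cons_val_two,
      Matrix.tail_cons, Matrix.cons_val_three, Fin.mk_one, Fin.isValue] <;>
    (try field_simp) <;> (try ring) <;> (try simp)

theorem pdK11 (μ : Fin 4) :
    pd μ (fun y : Fin 4 → ℝ => -Real.cos (y 3)) x =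
      ![0,
        0,
        0,
        Real.sin (x 3)] μ := by
  rw [show (fun y : Fin 4 → ℝ => -Real.cos (y 3))
      = (fun y : Fin 4 → ℝ => 1 * 1 * 1 * (-Real.cos (y 3)))
      from funext fun y => by ring]
  refine (pd_prod4 (hasDerivAt_const _ _) (hasDerivAt_const _ _) (hasDerivAt_const _ _) ((Real.hasDerivAt_cos _).neg) μ).trans ?_
  fin_cases μ <;>
    simp only [Matrix.cons_val_zero, Matrix.cons_val_one, Matrix.head_cons, Matrix.cons_val_two,
      Matrix.tail_cons, Matrix.cons_val_three, Fin.mk_one, Fin.isValue] <;>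
    (try field_simp) <;> (try ring) <;> (try simp)

theorem pdK12 (hs : Real.sin (x 2) ≠ 0) (μ : Fin 4) :
    pd μ (fun y : Fin 4 → ℝ => Real.sin (y 3) / Real.tan (y 2)) x =
      ![0,
        0,
        -(Real.sin (x 3) / Real.sin (x 2) ^ 2),
        Real.cos (x 3) * Real.cos (x 2) / Real.sin (x 2)] μ := by
  rw [show (fun y : Fin 4 → ℝ => Real.sin (y 3) / Real.tan (y 2))
      = (fun y : Fin 4 → ℝ => 1 * 1 * (Real.cos (y 2) / Real.sin (y 2)) * Real.sin (y 3))
      from funext fun y => by rw [Real.tan_eq_sin_div_cos, div_div_eq_mul_div]; ring]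
  refine (pd_prod4 (hasDerivAt_const _ _) (hasDerivAt_const _ _) (hcot' hs) (Real.hasDerivAt_sin _) μ).trans ?_
  fin_cases μ <;>
    simp only [Matrix.cons_val_zero, Matrix.cons_val_one, Matrix.head_cons, Matrix.cons_val_two,
      Matrix.tail_cons, Matrix.cons_val_three, Fin.mk_one, Fin.isValue] <;>
    (try field_simp) <;> (try ring) <;> (try simp)

/-- Each of the six vector fields satisfies the Killing equation
X^α ∂_α g_{μν} + g_{αν} ∂_μ X^α + g_{μα} ∂_ν X^α = 0 at every point of U. -/
theorem killing_equation_RW (k : ℝ) (a : ℝ → ℝ)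
    (ha : ContDiff ℝ ∞ a) (hapos : ∀ t, 0 < a t)
    (i : Fin 6) (x : Fin 4 → ℝ)
    (hr : 0 < x 1) (hθ₁ : 0 < x 2) (hθ₂ : x 2 < Real.pi)
    (hk : 0 < 1 - k * (x 1) ^ 2) (μ ν : Fin 4) :
    (∑ α, KV k i x α * pd α (fun y => gRW k a y μ ν) x)
      + (∑ α, gRW k a x α ν * pd μ (fun y => KV k i y α) x)
      + (∑ α, gRW k a x μ α * pd ν (fun y => KV k i y α) x) = 0 := by
  have hs : Real.sin (x 2) ≠ 0 := (Real.sin_pos_of_pos_of_lt_pi hθ₁ hθ₂).ne'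
  have hrne : x 1 ≠ 0 := hr.ne'
  have hC2 : Real.cos (x 2) ^ 2 = 1 - Real.sin (x 2) ^ 2 := by
    rw [← Real.sin_sq_add_cos_sq (x 2)]; ring
  have hC3 : Real.cos (x 3) ^ 2 = 1 - Real.sin (x 3) ^ 2 := by
    rw [← Real.sin_sq_add_cos_sq (x 3)]; ring
  have hcpos : 0 < Real.sqrt (1 - k * x 1 ^ 2) := Real.sqrt_pos.mpr hk
  have hc2 : Real.sqrt (1 - k * x 1 ^ 2) ^ 2 = 1 - k * x 1 ^ 2 := Real.sq_sqrt hk.le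
  have HM1 := pdM1 (x := x) ha hk
  have HM2 := pdM2 (x := x) (a := a) ha
  have HM3 := pdM3 (x := x) (a := a) ha
  have HK1 := pdK1 hk hrne
  have HK2 := pdK2 hk hrne
  have HK3 := pdK3 hk hrne hs
  have HK4 := pdK4 hk hrne
  have HK5 := pdK5 hk hrne
  have HK6 := pdK6 hk hrne hs
  have HK7 := pdK7 hk hrne
  have HK8 := pdK8 hk hrne
  have HK9 := pdK9 (x := x)
  have HK10 := pdK10 hs
  have HK11 := pdK11 (x := x)
  have HK12 := pdK12 hs
  have KVE0 : KV k 0 = fun x => ![0, chi k x * Real.sin (x 2) * Real.cos (x 3),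
      chi k x / x 1 * Real.cos (x 2) * Real.cos (x 3),
      -(chi k x * Real.sin (x 3) / (x 1 * Real.sin (x 2)))] := rfl
  have KVE1 : KV k 1 = fun x => ![0, chi k x * Real.sin (x 2) * Real.sin (x 3),
      chi k x / x 1 * Real.cos (x 2) * Real.sin (x 3),
      chi k x * Real.cos (x 3) / (x 1 * Real.sin (x 2))] := rfl
  have KVE2 : KV k 2 = fun x => ![0, chi k x * Real.cos (x 2),
      -(chi k x / x 1 * Real.sin (x 2)), 0] := rfl
  have KVE3 : KV k 3 = fun x => ![0, 0, Real.sin (x 3), Real.cos (x 3) / Real.tan (x 2)] := rfl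
  have KVE4 : KV k 4 = fun x => ![0, 0, -Real.cos (x 3), Real.sin (x 3) / Real.tan (x 2)] := rfl
  have KVE5 : KV k 5 = fun x => ![0, 0, 0, (1:ℝ)] := rfl
  have hμ : μ = 0 ∨ μ = 1 ∨ μ = 2 ∨ μ = 3 := by revert μ; decide
  have hν : ν = 0 ∨ ν = 1 ∨ ν = 2 ∨ ν = 3 := by clear hμ; revert ν; decide
  have hi : i = 0 ∨ i = 1 ∨ i = 2 ∨ i = 3 ∨ i = 4 ∨ i = 5 := by
    clear hμ hν; revert i; decide
  obtain rfl | rfl | rfl | rfl | rfl | rfl := hi <;>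
    obtain rfl | rfl | rfl | rfl := hμ <;> obtain rfl | rfl | rfl | rfl := hν
  all_goals (simp only [KVE0, KVE1, KVE2, KVE3, KVE4, KVE5, gRW, chi, Fin.sum_univ_four, Matrix.cons_val_zero, Matrix.cons_val_one,
      Matrix.head_cons, Matrix.cons_val_two, Matrix.tail_cons, Matrix.cons_val_three,
      Matrix.diagonal_apply, Fin.isValue, reduceIte, Fin.reduceEq,
      HM1, HM2, HM3, HK1, HK2, HK3, HK4, HK5, HK6, HK7, HK8, HK9, HK10, HK11, HK12, pd_const])
  all_goals (obtain ⟨c, hc⟩ : ∃ c, Real.sqrt (1 - k * x 1 ^ 2) = c := ⟨_, rfl⟩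
             rw [hc] at hcpos hc2
             try rw [hc]
             try rw [show k = (1 - c ^ 2) / x 1 ^ 2 from by rw [hc2]; field_simp; ring]
             try field_simp [hrne, hs, hcpos.ne']
             try ring
             try simp only [hC2, hC3]
             try ring)

end
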